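/- With f and g as in the first-order rogue wave ansatz (a₁ = 0), the pair (f, g) satisfies the second bilinear equation (i·D_t + D_x² + i·v·D_x³ + 6·i·v·D_x) g·f = 0. -/

import Mathlib

open Complex

noncomputable def dx (φ : ℝ → ℝ → ℂ) : ℝ → ℝ → ℂ := fun x t => deriv (fun y => φ y t) x
noncomputable def dt (φ : ℝ → ℝ → ℂ) : ℝ → ℝ → ℂ := fun x t => deriv (fun s => φ x s) t

noncomputable def fτ (v : ℝ) : ℝ → ℝ → ℂ := fun x t =>
  (1/2) * ((x : ℂ) + (2*I - 6*v)*t - 1/2) * ((x : ℂ) - (6*v + 2*I)*t - 1/2) + 1/8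

noncomputable def gτ (v : ℝ) : ℝ → ℝ → ℂ := fun x t =>
  (1/2) * ((x : ℂ) + (2*I - 6*v)*t + 1/2) * ((x : ℂ) - (6*v + 2*I)*t - 3/2) + 1/8

private lemma hof (x : ℝ) : HasDerivAt (fun y : ℝ => (y : ℂ)) 1 x := by
  simpa using (hasDerivAt_id x).ofReal_comp

private lemma dxf_eq (v : ℝ) (x t : ℝ) :
    dx (fτ v) x t = (x : ℂ) - 6*v*t - 1/2 := by
  have h1 : HasDerivAt (fun y : ℝ => (y : ℂ) + (2*I - 6*v)*t - 1/2) 1 x :=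
    ((hof x).add_const _).sub_const _
  have h2 : HasDerivAt (fun y : ℝ => (y : ℂ) - (6*v + 2*I)*t - 1/2) 1 x :=
    ((hof x).sub_const _).sub_const _
  have h : HasDerivAt (fun y : ℝ =>
      (1/2 : ℂ) * ((y : ℂ) + (2*I - 6*v)*t - 1/2) * ((y : ℂ) - (6*v + 2*I)*t - 1/2) + 1/8)
      ((1/2 * 1) * ((x : ℂ) - (6*v + 2*I)*t - 1/2)
        + (1/2 * ((x : ℂ) + (2*I - 6*v)*t - 1/2)) * 1) x :=
    ((h1.const_mul _).mul h2).add_const _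
  rw [dx]; unfold fτ; rw [h.deriv]; ring

private lemma dxg_eq (v : ℝ) (x t : ℝ) :
    dx (gτ v) x t = (x : ℂ) - 6*v*t - 1/2 := by
  have h1 : HasDerivAt (fun y : ℝ => (y : ℂ) + (2*I - 6*v)*t + 1/2) 1 x :=
    ((hof x).add_const _).add_const _
  have h2 : HasDerivAt (fun y : ℝ => (y : ℂ) - (6*v + 2*I)*t - 3/2) 1 x :=
    ((hof x).sub_const _).sub_const _
  have h : HasDerivAt (fun y : ℝ =>
      (1/2 : ℂ) * ((y : ℂ) + (2*I - 6*v)*t + 1/2) * ((y : ℂ) - (6*v + 2*I)*t - 3/2) + 1/8)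
      ((1/2 * 1) * ((x : ℂ) - (6*v + 2*I)*t - 3/2)
        + (1/2 * ((x : ℂ) + (2*I - 6*v)*t + 1/2)) * 1) x :=
    ((h1.const_mul _).mul h2).add_const _
  rw [dx]; unfold gτ; rw [h.deriv]; ring

private lemma dxlin (c : ℂ) (x t : ℝ) :
    deriv (fun y : ℝ => (y : ℂ) - c) x = 1 :=
  ((hof x).sub_const c).deriv

private lemma dxxf_eq (v : ℝ) (x t : ℝ) : dx (dx (fτ v)) x t = 1 := by
  have : (fun y : ℝ => dx (fτ v) y t) = fun y : ℝ => (y : ℂ) - (6*v*t + 1/2) := by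
    funext y; rw [dxf_eq]; ring
  rw [dx, this, dxlin _ x t]

private lemma dxxg_eq (v : ℝ) (x t : ℝ) : dx (dx (gτ v)) x t = 1 := by
  have : (fun y : ℝ => dx (gτ v) y t) = fun y : ℝ => (y : ℂ) - (6*v*t + 1/2) := by
    funext y; rw [dxg_eq]; ring
  rw [dx, this, dxlin _ x t]

private lemma dxxxf_eq (v : ℝ) (x t : ℝ) : dx (dx (dx (fτ v))) x t = 0 := by
  have : (fun y : ℝ => dx (dx (fτ v)) y t) = fun _ : ℝ => (1 : ℂ) := by
    funext y; rw [dxxf_eq]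
  rw [dx, this, deriv_const]

private lemma dxxxg_eq (v : ℝ) (x t : ℝ) : dx (dx (dx (gτ v))) x t = 0 := by
  have : (fun y : ℝ => dx (dx (gτ v)) y t) = fun _ : ℝ => (1 : ℂ) := by
    funext y; rw [dxxg_eq]
  rw [dx, this, deriv_const]

private lemma dtf_eq (v : ℝ) (x t : ℝ) :
    dt (fτ v) x t = (1/2) * (2*I - 6*(v:ℂ)) * ((x : ℂ) - (6*v + 2*I)*t - 1/2)
      - (1/2) * ((x : ℂ) + (2*I - 6*v)*t - 1/2) * (6*(v:ℂ) + 2*I) := by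
  have h1 : HasDerivAt (fun s : ℝ => (x : ℂ) + (2*I - 6*v)*s - 1/2) ((2*I - 6*(v:ℂ)) * 1) t :=
    (((hof t).const_mul _).const_add _).sub_const _
  have h2 : HasDerivAt (fun s : ℝ => (x : ℂ) - (6*v + 2*I)*s - 1/2) (-((6*(v:ℂ) + 2*I) * 1)) t :=
    (((hof t).const_mul _).const_sub _).sub_const _
  have h : HasDerivAt (fun s : ℝ =>
      (1/2 : ℂ) * ((x : ℂ) + (2*I - 6*v)*s - 1/2) * ((x : ℂ) - (6*v + 2*I)*s - 1/2) + 1/8)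
      ((1/2 * ((2*I - 6*(v:ℂ)) * 1)) * ((x : ℂ) - (6*v + 2*I)*t - 1/2)
        + (1/2 * ((x : ℂ) + (2*I - 6*v)*t - 1/2)) * (-((6*(v:ℂ) + 2*I) * 1))) t :=
    ((h1.const_mul _).mul h2).add_const _
  rw [dt]; unfold fτ; rw [h.deriv]; ring

private lemma dtg_eq (v : ℝ) (x t : ℝ) :
    dt (gτ v) x t = (1/2) * (2*I - 6*(v:ℂ)) * ((x : ℂ) - (6*v + 2*I)*t - 3/2)
      - (1/2) * ((x : ℂ) + (2*I - 6*v)*t + 1/2) * (6*(v:ℂ) + 2*I) := by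
  have h1 : HasDerivAt (fun s : ℝ => (x : ℂ) + (2*I - 6*v)*s + 1/2) ((2*I - 6*(v:ℂ)) * 1) t :=
    (((hof t).const_mul _).const_add _).add_const _
  have h2 : HasDerivAt (fun s : ℝ => (x : ℂ) - (6*v + 2*I)*s - 3/2) (-((6*(v:ℂ) + 2*I) * 1)) t :=
    (((hof t).const_mul _).const_sub _).sub_const _
  have h : HasDerivAt (fun s : ℝ =>
      (1/2 : ℂ) * ((x : ℂ) + (2*I - 6*v)*s + 1/2) * ((x : ℂ) - (6*v + 2*I)*s - 3/2) + 1/8)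
      ((1/2 * ((2*I - 6*(v:ℂ)) * 1)) * ((x : ℂ) - (6*v + 2*I)*t - 3/2)
        + (1/2 * ((x : ℂ) + (2*I - 6*v)*t + 1/2)) * (-((6*(v:ℂ) + 2*I) * 1))) t :=
    ((h1.const_mul _).mul h2).add_const _
  rw [dt]; unfold gτ; rw [h.deriv]; ring

/-- `(f, g)` satisfies the second bilinear equation
`(i D_t + D_x² + i v D_x³ + 6 i v D_x) g·f = 0`. -/
theorem second_bilinear_equation (v : ℝ) :
    ∀ x t : ℝ,
      I * (dt (gτ v) x t * fτ v x t - gτ v x t * dt (fτ v) x t)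
      + (dx (dx (gτ v)) x t * fτ v x t - 2 * dx (gτ v) x t * dx (fτ v) x t
          + gτ v x t * dx (dx (fτ v)) x t)
      + I * v * (dx (dx (dx (gτ v))) x t * fτ v x t
          - 3 * dx (dx (gτ v)) x t * dx (fτ v) x t
          + 3 * dx (gτ v) x t * dx (dx (fτ v)) x t
          - gτ v x t * dx (dx (dx (fτ v))) x t)
      + 6 * I * v * (dx (gτ v) x t * fτ v x t - gτ v x t * dx (fτ v) x t) = 0 := by
  intro x t
  simp only [dxf_eq, dxg_eq, dxxf_eq, dxxg_eq, dxxxf_eq, dxxxg_eq, dtf_eq, dtg_eq, fτ, gτ]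
  linear_combination (-2*(t:ℂ)*I - (x:ℂ)^2 + (x:ℂ) - 4*(t:ℂ)^2*I^2 - 36*(t:ℂ)^2*(v:ℂ)^2
    - 1/2 + 12*(x:ℂ)*(t:ℂ)*(v:ℂ) - 6*(t:ℂ)*(v:ℂ)) * Complex.I_sq
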